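/- arXiv:math/0211345 — 2 statements merged into one kernel-verified Lean document; each statement's English description precedes it below -/
import Mathlib

section
/- Let X be a compact Hausdorff topological space and let P be a prime element of Max C(X) (the quantale of closed linear subspaces of the commutative C*-algebra C(X) of complex-valued continuous functions on X) with P ≠ C(X). Then there exists a point x₀ ∈ X such that P = {f ∈ C(X) : f(x₀) = 0}. In particular, every proper prime element of Max C(X) is a maximal proper closed linear subspace of C(X) and a closed two-sided ideal. -/
variable {X : Type*} [TopologicalSpace X] [CompactSpace X] [T2Space X]

/-- The quantale multiplication of `Max C(X)`: `M∘N` is the closure of the linear span of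
the products. -/
noncomputable def qmul (M N : Submodule ℂ C(X, ℂ)) : Submodule ℂ C(X, ℂ) :=
  (M * N).topologicalClosure

/-- A prime element of the quantale `Max C(X)` of closed linear subspaces of `C(X)`:
`M∘⊤∘N ≤ P` implies `M ≤ P` or `N ≤ P`. -/
def IsPrimeEl (P : Submodule ℂ C(X, ℂ)) : Prop :=
  ∀ M N : Submodule ℂ C(X, ℂ), IsClosed (M : Set C(X, ℂ)) → IsClosed (N : Set C(X, ℂ)) →
    qmul (qmul M ⊤) N ≤ P → M ≤ P ∨ N ≤ P

set_option linter.unusedSectionVars false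

noncomputable def vI (C : Set X) : Submodule ℂ C(X, ℂ) where
  carrier := {f | ∀ x ∈ C, f x = 0}
  add_mem' := fun {a b} ha hb x hx => by simp [ha x hx, hb x hx]
  zero_mem' := fun x _ => rfl
  smul_mem' := fun c f hf x hx => by simp [hf x hx]

lemma vI_mem {C : Set X} {f : C(X, ℂ)} : f ∈ vI C ↔ ∀ x ∈ C, f x = 0 := Iff.rfl

lemma vI_closed (C : Set X) : IsClosed ((vI C : Submodule ℂ C(X, ℂ)) : Set C(X, ℂ)) := by
  have : ((vI C : Submodule ℂ C(X, ℂ)) : Set C(X, ℂ)) =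
      ⋂ x ∈ C, {f : C(X, ℂ) | f x = 0} := by
    ext f
    simp only [SetLike.mem_coe, vI_mem, Set.mem_iInter, Set.mem_setOf_eq]
  rw [this]
  exact isClosed_biInter fun x _ =>
    isClosed_singleton.preimage (continuous_eval_const x)

noncomputable def cutoff (f : C(X, ℂ)) (ε : ℝ) : C(X, ℂ) :=
  ⟨fun x => ((min 1 (max 0 (2 * ‖f x‖ / ε - 1)) : ℝ) : ℂ), by fun_prop⟩

lemma cutoff_eq_zero {f : C(X, ℂ)} {ε : ℝ} (hε : 0 < ε) {x : X} (hx : ‖f x‖ ≤ ε / 2) :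
    cutoff f ε x = 0 := by
  have : 2 * ‖f x‖ / ε - 1 ≤ 0 := by
    rw [sub_nonpos, div_le_one hε]
    linarith
  simp only [cutoff, ContinuousMap.coe_mk]
  rw [max_eq_left this, min_eq_right zero_le_one]
  simp

lemma cutoff_est {f : C(X, ℂ)} {ε : ℝ} (hε : 0 < ε) (x : X) :
    ‖f x - (cutoff f ε * f * cutoff f ε) x‖ ≤ ε := by
  set r : ℝ := min 1 (max 0 (2 * ‖f x‖ / ε - 1)) with hr
  have hcut : cutoff f ε x = (r : ℂ) := rfl
  have hr0 : 0 ≤ r := le_min zero_le_one (le_max_left _ _)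
  have hr1 : r ≤ 1 := min_le_left _ _
  have heq : f x - (cutoff f ε * f * cutoff f ε) x = f x * (1 - (r : ℂ) * r) := by
    simp only [ContinuousMap.mul_apply, hcut]
    ring
  rw [heq]
  by_cases h : ‖f x‖ < ε
  · have h1 : ‖(1 : ℂ) - (r : ℂ) * r‖ ≤ 1 := by
      have : ((1 : ℝ) - r * r : ℝ) = ((1 : ℂ) - (r:ℂ) * r) := by push_cast; ring
      rw [← this, Complex.norm_real, Real.norm_eq_abs, abs_of_nonneg (by nlinarith)]
      nlinarith
    calc ‖f x * (1 - (r:ℂ) * r)‖ = ‖f x‖ * ‖(1:ℂ) - (r:ℂ)*r‖ := norm_mul _ _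
      _ ≤ ‖f x‖ * 1 := by nlinarith [norm_nonneg (f x)]
      _ ≤ ε := by linarith
  · push_neg at h
    have : (1 : ℝ) ≤ 2 * ‖f x‖ / ε - 1 := by
      rw [le_sub_iff_add_le, le_div_iff₀ hε]
      linarith
    have hreq : r = 1 := by
      rw [hr, max_eq_right (le_trans zero_le_one this), min_eq_left this]
    rw [hreq]
    simp [hε.le]

lemma norm_sub_cutoff {f : C(X, ℂ)} {ε : ℝ} (hε : 0 < ε) :
    ‖f - cutoff f ε * f * cutoff f ε‖ ≤ ε := by
  rw [ContinuousMap.norm_le _ hε.le]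
  intro x
  simpa using cutoff_est hε x

/-- Upper bound: the triple product of vanishing ideals vanishes on the union. -/
lemma qmul_le_vI (C D : Set X) : qmul (qmul (vI C) ⊤) (vI D) ≤ vI (C ∪ D) := by
  have h1 : qmul (vI C) ⊤ ≤ vI C := by
    refine Submodule.topologicalClosure_minimal _ (Submodule.mul_le.2 ?_) (vI_closed C)
    intro a ha b _ x hx
    simp [ContinuousMap.mul_apply, ha x hx]
  refine Submodule.topologicalClosure_minimal _ (Submodule.mul_le.2 ?_) (vI_closed _)
  intro a ha b hb x hx
  rcases hx with hx | hx
  · simp [ContinuousMap.mul_apply, h1 ha x hx]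
  · simp [ContinuousMap.mul_apply, hb x hx]

/-- Lower bound: every function vanishing on `C ∪ D` lies in the triple product. -/
lemma vI_le_qmul (C D : Set X) : vI (C ∪ D) ≤ qmul (qmul (vI C) ⊤) (vI D) := by
  intro f hf
  have hsub : (((vI C * ⊤) * vI D : Submodule ℂ C(X, ℂ)) : Set C(X, ℂ)) ⊆
      (qmul (qmul (vI C) ⊤) (vI D) : Submodule ℂ C(X, ℂ)) := by
    refine SetLike.coe_subset_coe.2 ?_
    refine le_trans (mul_le_mul' ?_ le_rfl) (Submodule.le_topologicalClosure _)
    exact Submodule.le_topologicalClosure _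
  have hcl : f ∈ closure (((vI C * ⊤) * vI D : Submodule ℂ C(X, ℂ)) : Set C(X, ℂ)) := by
    rw [Metric.mem_closure_iff]
    intro ε hε
    refine ⟨cutoff f (ε/2) * f * cutoff f (ε/2), ?_, ?_⟩
    · have hψC : cutoff f (ε/2) ∈ vI C := fun x hx => by
        apply cutoff_eq_zero (by linarith)
        rw [hf x (Or.inl hx)]; simp; positivity
      have hψD : cutoff f (ε/2) ∈ vI D := fun x hx => by
        apply cutoff_eq_zero (by linarith)
        rw [hf x (Or.inr hx)]; simp; positivity
      exact Submodule.mul_mem_mul (Submodule.mul_mem_mul hψC Submodule.mem_top) hψD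
    · rw [dist_eq_norm]
      calc ‖f - cutoff f (ε/2) * f * cutoff f (ε/2)‖ ≤ ε/2 := norm_sub_cutoff (by linarith)
        _ < ε := by linarith
  exact closure_minimal hsub (Submodule.isClosed_topologicalClosure _) hcl

/-- Directed intersections: vanishing ideal of a chain intersection. -/
lemma vI_sInter_le (P : Submodule ℂ C(X, ℂ)) (hPc : IsClosed (P : Set C(X, ℂ)))
    (c : Set (Set X)) (hne : c.Nonempty) (hchain : IsChain (· ⊆ ·) c)
    (hcl : ∀ s ∈ c, IsClosed s) (hle : ∀ s ∈ c, vI s ≤ P) :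
    vI (⋂₀ c) ≤ P := by
  intro f hf
  have hfP : f ∈ closure (P : Set C(X, ℂ)) := by
    rw [Metric.mem_closure_iff]
    intro ε hε
    -- find s ∈ c contained in U := {x | ‖f x‖ < ε/4}
    set U : Set X := {x | ‖f x‖ < ε/4} with hU
    have hUopen : IsOpen U := by
      have : Continuous fun x => ‖f x‖ := f.continuous.norm
      exact isOpen_lt this continuous_const
    have hsub : ⋂₀ c ⊆ U := by
      intro x hx
      rw [Set.mem_setOf_eq, hf x hx]
      simp; positivity
    have hexists : ∃ s ∈ c, s ⊆ U := by
      by_contra hcon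
      push_neg at hcon
      have hne' : Nonempty c := hne.to_subtype
      have : (⋂ s : c, ((s : Set X) ∩ Uᶜ)).Nonempty := by
        apply IsCompact.nonempty_iInter_of_directed_nonempty_isCompact_isClosed
        · intro s t
          rcases hchain.total s.2 t.2 with h | h
          · exact ⟨s, subset_rfl, Set.inter_subset_inter_left _ h⟩
          · exact ⟨t, Set.inter_subset_inter_left _ h, subset_rfl⟩
        · intro s
          obtain ⟨x, hx, hxU⟩ := Set.not_subset.1 (hcon s s.2)
          exact ⟨x, hx, hxU⟩
        · intro s
          exact ((hcl s s.2).inter (hUopen.isClosed_compl)).isCompact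
        · intro s
          exact (hcl s s.2).inter hUopen.isClosed_compl
      obtain ⟨x, hx⟩ := this
      simp only [Set.mem_iInter, Set.mem_inter_iff] at hx
      have hxI : x ∈ ⋂₀ c := by
        intro s hs
        exact (hx ⟨s, hs⟩).1
      exact (hx ⟨hne.choose, hne.choose_spec⟩).2 (hsub hxI)
    obtain ⟨s, hs, hsU⟩ := hexists
    refine ⟨cutoff f (ε/2) * f * cutoff f (ε/2), ?_, ?_⟩
    · apply hle s hs
      intro x hx
      have : cutoff f (ε/2) x = 0 := by
        apply cutoff_eq_zero (by linarith)
        have := hsU hx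
        rw [Set.mem_setOf_eq] at this
        linarith
      simp [ContinuousMap.mul_apply, this]
    · rw [dist_eq_norm]
      calc ‖f - cutoff f (ε/2) * f * cutoff f (ε/2)‖ ≤ ε/2 := norm_sub_cutoff (by linarith)
        _ < ε := by linarith
  rwa [hPc.closure_eq] at hfP

lemma exists_point (P : Submodule ℂ C(X, ℂ)) (hPc : IsClosed (P : Set C(X, ℂ)))
    (hP : IsPrimeEl P) (hPne : P ≠ ⊤) : ∃ x₀ : X, vI {x₀} ≤ P := by
  -- X nonempty
  have hXne : Nonempty X := by
    by_contra h
    rw [not_nonempty_iff] at h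
    apply hPne
    rw [eq_top_iff]
    intro f _
    have : f = 0 := by ext x; exact (h.false x).elim
    rw [this]; exact P.zero_mem
  set S : Set (Set X) := {C | IsClosed C ∧ C.Nonempty ∧ vI C ≤ P} with hS
  have hzorn : ∃ m, Minimal (· ∈ S) m := by
    apply zorn_superset
    intro c hcS hchain
    rcases c.eq_empty_or_nonempty with rfl | hne
    · refine ⟨Set.univ, ⟨isClosed_univ, Set.univ_nonempty, ?_⟩, by simp⟩
      intro f hf
      have : f = 0 := by ext x; exact hf x (Set.mem_univ x)
      rw [this]; exact P.zero_mem
    · refine ⟨⋂₀ c, ⟨?_, ?_, ?_⟩, fun s hs => Set.sInter_subset_of_mem hs⟩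
      · exact isClosed_sInter fun s hs => (hcS hs).1
      · have hne' : Nonempty c := hne.to_subtype
        have : (⋂ s : c, (s : Set X)).Nonempty := by
          apply IsCompact.nonempty_iInter_of_directed_nonempty_isCompact_isClosed
          · intro s t
            rcases hchain.total s.2 t.2 with h | h
            · exact ⟨s, subset_rfl, h⟩
            · exact ⟨t, h, subset_rfl⟩
          · exact fun s => (hcS s.2).2.1
          · exact fun s => (hcS s.2).1.isCompact
          · exact fun s => (hcS s.2).1
        rwa [Set.sInter_eq_iInter]
      · exact vI_sInter_le P hPc c hne hchain (fun s hs => (hcS hs).1)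
          (fun s hs => (hcS hs).2.2)
  obtain ⟨m, hm⟩ := hzorn
  obtain ⟨hmc, ⟨x₀, hx₀⟩, hmP⟩ := hm.prop
  refine ⟨x₀, ?_⟩
  -- show m = {x₀}
  have hsingle : m = {x₀} := by
    refine Set.eq_singleton_iff_unique_mem.2 ⟨hx₀, fun y hy => ?_⟩
    by_contra hyx
    obtain ⟨U, V, hUo, hVo, hyU, hxV, hUV⟩ := t2_separation hyx
    set C : Set X := m \ V with hC
    set D : Set X := m \ U with hD
    have hCc : IsClosed C := hmc.sdiff hVo
    have hDc : IsClosed D := hmc.sdiff hUo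
    have hunion : C ∪ D = m := by
      apply Set.Subset.antisymm
      · rintro x (⟨hx, _⟩ | ⟨hx, _⟩) <;> exact hx
      · intro x hx
        by_cases h : x ∈ V
        · right
          exact ⟨hx, fun hU' => Set.disjoint_left.1 hUV hU' h⟩
        · left; exact ⟨hx, h⟩
    have hql : qmul (qmul (vI C) ⊤) (vI D) ≤ P := by
      refine le_trans (qmul_le_vI C D) ?_
      rw [show vI (C ∪ D) = vI m by rw [hunion]]
      exact hmP
    rcases hP (vI C) (vI D) (vI_closed C) (vI_closed D) hql with h | h
    · have hCS : C ∈ S := ⟨hCc, ⟨y, hy, fun hyV => Set.disjoint_left.1 hUV hyU hyV⟩, h⟩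
      have := hm.2 hCS Set.diff_subset
      exact (this hx₀).2 hxV
    · have hDS : D ∈ S := ⟨hDc, ⟨x₀, hx₀, fun hxU => Set.disjoint_left.1 hUV hxU hxV⟩, h⟩
      have := hm.2 hDS Set.diff_subset
      exact (this hy).2 hyU
  rw [← hsingle]
  exact hmP

/-- every proper prime element `P` of `Max C(X)` (`X` compact Hausdorff) is of
the form `{f : f(x₀) = 0}` for some point `x₀ ∈ X`; in particular it is a maximal proper
closed linear subspace of `C(X)` and a closed two-sided ideal. -/
theorem prime_of_maxC_eq_vanishing_ideal
    (P : Submodule ℂ C(X, ℂ)) (hPc : IsClosed (P : Set C(X, ℂ)))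
    (hP : IsPrimeEl P) (hPne : P ≠ ⊤) :
    (∃ x₀ : X, ∀ f : C(X, ℂ), f ∈ P ↔ f x₀ = 0) ∧
    (∀ M : Submodule ℂ C(X, ℂ), IsClosed (M : Set C(X, ℂ)) → P < M → M = ⊤) ∧
    (∀ f ∈ P, ∀ g : C(X, ℂ), g * f ∈ P ∧ f * g ∈ P) := by
  obtain ⟨x₀, hI⟩ := exists_point P hPc hP hPne
  have hmem : ∀ f : C(X, ℂ), f ∈ P ↔ f x₀ = 0 := by
    intro f
    constructor
    · intro hf
      by_contra hfx
      apply hPne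
      rw [eq_top_iff]
      intro g _
      have h1 : g - (g x₀ / f x₀) • f ∈ P := by
        apply hI
        intro x hx
        rw [Set.mem_singleton_iff] at hx
        subst hx
        simp [div_mul_cancel₀ _ hfx]
      have h2 : g = (g - (g x₀ / f x₀) • f) + (g x₀ / f x₀) • f := by ring
      rw [h2]
      exact P.add_mem h1 (P.smul_mem _ hf)
    · intro hf
      apply hI
      intro x hx
      rw [Set.mem_singleton_iff] at hx
      subst hx
      exact hf
  refine ⟨⟨x₀, hmem⟩, ?_, ?_⟩
  · intro M _ hlt
    obtain ⟨f, hfM, hfP⟩ := SetLike.exists_of_lt hlt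
    have hfx : f x₀ ≠ 0 := fun h => hfP ((hmem f).2 h)
    rw [eq_top_iff]
    intro g _
    have h1 : g - (g x₀ / f x₀) • f ∈ P := by
      apply (hmem _).2
      simp [div_mul_cancel₀ _ hfx]
    have h2 : g = (g - (g x₀ / f x₀) • f) + (g x₀ / f x₀) • f := by ring
    rw [h2]
    exact M.add_mem (hlt.le h1) (M.smul_mem _ hfM)
  · intro f hf g
    have hfx : f x₀ = 0 := (hmem f).1 hf
    constructor
    · exact (hmem _).2 (by simp [ContinuousMap.mul_apply, hfx])
    · exact (hmem _).2 (by simp [ContinuousMap.mul_apply, hfx])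
end

section
/- Max ℂ has exactly two elements ({0} and ℂ), so the product quantale Max ℂ × Max ℂ (with componentwise order and multiplication) has exactly four elements, whereas the lattice Max(ℂ × ℂ) of linear subspaces of the C*-algebra ℂ × ℂ is infinite. Consequently there is no order isomorphism (a fortiori no isomorphism of unital quantales) between Max(ℂ × ℂ) and Max ℂ × Max ℂ; in particular, the functor Max does not preserve binary products. -/
/-- The elements of `Max A`: closed linear subspaces of `A` (here used for `A = ℂ` and
`A = ℂ × ℂ`), with the inclusion (partial) order. -/
abbrev MaxOf (A : Type*) [AddCommGroup A] [Module ℂ A] [TopologicalSpace A] :=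
  {M : Submodule ℂ A // IsClosed (M : Set A)}

lemma maxC_card : Nat.card (MaxOf ℂ) = 2 := by
  have e : MaxOf ℂ ≃ Submodule ℂ ℂ :=
    Equiv.subtypeUnivEquiv (fun M => M.closed_of_finiteDimensional)
  rw [Nat.card_eq_of_bijective e e.bijective]
  have : IsSimpleOrder (Submodule ℂ ℂ) := inferInstance
  classical
  have e2 : Submodule ℂ ℂ ≃ Bool := by
    refine ⟨fun M => decide (M = ⊤), fun b => if b then ⊤ else ⊥, fun M => ?_, fun b => ?_⟩
    · rcases eq_bot_or_eq_top M with rfl | rfl <;> simp [bot_ne_top]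
    · cases b <;> simp
  rw [Nat.card_eq_of_bijective e2 e2.bijective]
  simp

lemma maxCC_infinite : Infinite (MaxOf (ℂ × ℂ)) := by
  refine Infinite.of_injective
    (fun c : ℂ => (⟨Submodule.span ℂ {((1 : ℂ), c)},
      Submodule.closed_of_finiteDimensional _⟩ : MaxOf (ℂ × ℂ))) ?_
  intro a b hab
  have h : ((1 : ℂ), b) ∈ Submodule.span ℂ {((1 : ℂ), a)} := by
    rw [show Submodule.span ℂ {((1 : ℂ), a)} = Submodule.span ℂ {((1 : ℂ), b)} from
      congrArg Subtype.val hab]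
    exact Submodule.mem_span_singleton_self _
  rw [Submodule.mem_span_singleton] at h
  obtain ⟨t, ht⟩ := h
  rw [Prod.ext_iff] at ht
  simp only [Prod.smul_fst, Prod.smul_snd, smul_eq_mul, mul_one] at ht
  obtain ⟨rfl, h2⟩ := ht
  simpa using h2

/-- `Max ℂ` has exactly two elements, so `Max ℂ × Max ℂ` has exactly four
elements, whereas `Max (ℂ × ℂ)` is infinite.  Consequently there is no order isomorphism
(a fortiori no isomorphism of unital quantales) between `Max (ℂ × ℂ)` and `Max ℂ × Max ℂ`;
in particular, `Max` does not preserve binary products. -/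
theorem max_does_not_preserve_products :
    Nat.card (MaxOf ℂ) = 2 ∧
    Nat.card (MaxOf ℂ × MaxOf ℂ) = 4 ∧
    Infinite (MaxOf (ℂ × ℂ)) ∧
    IsEmpty (MaxOf (ℂ × ℂ) ≃o MaxOf ℂ × MaxOf ℂ) := by
  have h1 := maxC_card
  have h2 : Nat.card (MaxOf ℂ × MaxOf ℂ) = 4 := by
    rw [Nat.card_prod, h1]
  have h3 := maxCC_infinite
  refine ⟨h1, h2, h3, ⟨fun f => ?_⟩⟩
  have : Nat.card (MaxOf (ℂ × ℂ)) = 4 :=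
    (Nat.card_eq_of_bijective f.toEquiv f.toEquiv.bijective).trans h2
  have h0 : Nat.card (MaxOf (ℂ × ℂ)) = 0 := Nat.card_eq_zero_of_infinite
  omega
end
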